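/- Let C : [0,∞) → 𝒫(ℝ) be such that {(x,h) ∈ ℝ × [0,∞) : x ∈ C(h)} is Lebesgue-measurable, each C(h) has finite Lebesgue measure, and ρ[C](x) < ∞ for almost every x. Let Φ : [0,∞) → ℝ be differentiable and convex with Φ(0) = 0 and Φ' ≥ 0, and assume h ↦ Φ'(h)·|C(h)| is Lebesgue integrable on (0,∞). Then ∫_ℝ Φ(ρ[C](x)) dx ≤ ∫_0^∞ Φ'(h) |C(h)| dh. -/

import Mathlib

open MeasureTheory Set
open scoped ENNReal

/-- Rearrangement-type bound: for a monotone nonnegative function, the integral over the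
left-most interval of a given measure is at most the integral over any subset of `[0,∞)` with
the same measure. -/
lemma rearrange_aux {ψ : ℝ → ℝ} (hmono : Monotone ψ) (hnn : ∀ t, 0 ≤ ψ t)
    {S : Set ℝ} (hS : MeasurableSet S) (hS0 : S ⊆ Ici 0) (hSfin : volume S ≠ ⊤) :
    ∫⁻ t in Ico 0 (volume S).toReal, ENNReal.ofReal (ψ t) ≤
      ∫⁻ t in S, ENNReal.ofReal (ψ t) := by
  set r : ℝ := (volume S).toReal with hr
  set g : ℝ → ℝ≥0∞ := fun t => ENNReal.ofReal (ψ t) with hgdef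
  set A : Set ℝ := Ico 0 r with hA
  have hAmeas : MeasurableSet A := measurableSet_Ico
  have hvolA : volume A = volume S := by
    rw [hA, Real.volume_Ico, sub_zero, hr, ENNReal.ofReal_toReal hSfin]
  have hinterfin : volume (A ∩ S) ≠ ⊤ :=
    fun h => hSfin (top_le_iff.mp (h ▸ measure_mono inter_subset_right))
  have heq : volume (A \ S) = volume (S \ A) := by
    have h1 : volume (A \ (A ∩ S)) = volume A - volume (A ∩ S) :=
      measure_diff inter_subset_left (hAmeas.inter hS).nullMeasurableSet hinterfin
    have h2 : volume (S \ (S ∩ A)) = volume S - volume (S ∩ A) :=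
      measure_diff inter_subset_left (hS.inter hAmeas).nullMeasurableSet
        (by rwa [inter_comm])
    rw [diff_self_inter] at h1 h2
    rw [h1, h2, hvolA, inter_comm]
  have hup : ∫⁻ t in A \ S, g t ≤ ENNReal.ofReal (ψ r) * volume (A \ S) := by
    rw [← setLIntegral_const]
    refine setLIntegral_mono' (hAmeas.diff hS) fun t ht => ?_
    exact ENNReal.ofReal_le_ofReal (hmono ht.1.2.le)
  have hdown : ENNReal.ofReal (ψ r) * volume (S \ A) ≤ ∫⁻ t in S \ A, g t := by
    rw [← setLIntegral_const]
    refine setLIntegral_mono' (hS.diff hAmeas) fun t ht => ?_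
    refine ENNReal.ofReal_le_ofReal (hmono ?_)
    by_contra hlt
    exact ht.2 ⟨hS0 ht.1, lt_of_not_ge hlt⟩
  calc ∫⁻ t in A, g t = (∫⁻ t in A ∩ S, g t) + ∫⁻ t in A \ S, g t :=
        (lintegral_inter_add_diff (μ := volume) g A hS).symm
    _ ≤ (∫⁻ t in A ∩ S, g t) + ENNReal.ofReal (ψ r) * volume (A \ S) := by gcongr
    _ = (∫⁻ t in S ∩ A, g t) + ENNReal.ofReal (ψ r) * volume (S \ A) := by
        rw [inter_comm, heq]
    _ ≤ (∫⁻ t in S ∩ A, g t) + ∫⁻ t in S \ A, g t := by gcongr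
    _ = ∫⁻ t in S, g t := lintegral_inter_add_diff (μ := volume) g S hAmeas

/-- Lemma 4.2 (inequality part): layer-cake bound on the internal energy. -/
theorem stmt_5 (C : ℝ → Set ℝ)
    (hmeas : MeasurableSet {p : ℝ × ℝ | 0 ≤ p.2 ∧ p.1 ∈ C p.2})
    (hfin : ∀ h : ℝ, volume (C h) < ⊤)
    (hρfin : ∀ᵐ x : ℝ, volume {h : ℝ | 0 ≤ h ∧ x ∈ C h} ≠ ⊤)
    (Φ Φ' : ℝ → ℝ)
    (hΦdiff : ∀ x ∈ Ici (0:ℝ), HasDerivWithinAt Φ (Φ' x) (Ici 0) x)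
    (hΦconv : ConvexOn ℝ (Ici 0) Φ)
    (hΦ0 : Φ 0 = 0)
    (hΦ'nn : ∀ x ∈ Ici (0:ℝ), 0 ≤ Φ' x)
    (hint : IntegrableOn (fun h => Φ' h * (volume (C h)).toReal) (Ioi 0)) :
    (∫ x : ℝ, Φ ((volume {h : ℝ | 0 ≤ h ∧ x ∈ C h}).toReal)) ≤
      ∫ h in Ioi (0:ℝ), Φ' h * (volume (C h)).toReal := by
  set E : Set (ℝ × ℝ) := {p : ℝ × ℝ | 0 ≤ p.2 ∧ p.1 ∈ C p.2} with hE
  set S : ℝ → Set ℝ := fun x => {h : ℝ | 0 ≤ h ∧ x ∈ C h} with hSdef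
  set ρ : ℝ → ℝ≥0∞ := fun x => volume (S x) with hρdef
  -- monotonicity of Φ' on [0,∞)
  have hΦ'mono : MonotoneOn Φ' (Ici 0) := by
    intro a ha b hb hab
    rcases eq_or_lt_of_le hab with rfl | h
    · exact le_rfl
    · calc Φ' a ≤ slope Φ a b :=
            hΦconv.le_slope_of_hasDerivWithinAt ha hb h (hΦdiff a ha)
        _ ≤ Φ' b := hΦconv.slope_le_of_hasDerivWithinAt ha hb h (hΦdiff b hb)
  set ψ : ℝ → ℝ := fun t => Φ' (max t 0) with hψdef
  have hψmono : Monotone ψ := fun a b hab =>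
    hΦ'mono (le_max_right a 0) (le_max_right b 0) (max_le_max hab le_rfl)
  have hψnn : ∀ t, 0 ≤ ψ t := fun t => hΦ'nn _ (le_max_right t 0)
  have hψeq : ∀ t, 0 ≤ t → ψ t = Φ' t := fun t ht => by
    simp [hψdef, max_eq_left ht]
  set g : ℝ → ℝ≥0∞ := fun t => ENNReal.ofReal (ψ t) with hgdef
  have hgmeas : Measurable g := ENNReal.measurable_ofReal.comp hψmono.measurable
  -- FTC: Φ r = ∫_0^r ψ for r ≥ 0
  have hftc : ∀ r : ℝ, 0 ≤ r → Φ r = ∫ t in (0:ℝ)..r, ψ t := by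
    intro r hr
    have hcont : ContinuousOn Φ (Icc 0 r) := fun x hx =>
      ((hΦdiff x hx.1).continuousWithinAt).mono Icc_subset_Ici_self
    have hderiv : ∀ x ∈ Ioo (0:ℝ) r, HasDerivWithinAt Φ (ψ x) (Ioi x) x := by
      intro x hx
      have h1 := (hΦdiff x hx.1.le).mono
        (show Ioi x ⊆ Ici 0 from fun t ht => (hx.1.trans ht).le)
      simpa [hψdef, max_eq_left hx.1.le] using h1
    have := intervalIntegral.integral_eq_sub_of_hasDeriv_right_of_le hr hcont hderiv
      hψmono.intervalIntegrable
    rw [this, hΦ0, sub_zero]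
  have hΦnn : ∀ r : ℝ, 0 ≤ r → 0 ≤ Φ r := fun r hr => by
    rw [hftc r hr]
    exact intervalIntegral.integral_nonneg hr fun t _ => hψnn t
  -- lintegral form of FTC
  have hftc' : ∀ r : ℝ, 0 ≤ r → ENNReal.ofReal (Φ r) = ∫⁻ t in Ico 0 r, g t := by
    intro r hr
    rw [hftc r hr, intervalIntegral.integral_of_le hr]
    have h1 : ENNReal.ofReal (∫ t in Ioc (0:ℝ) r, ψ t) = ∫⁻ t in Ioc (0:ℝ) r, g t :=
      ofReal_integral_eq_lintegral_ofReal (hψmono.intervalIntegrable (a := 0) (b := r)).1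
        (Filter.Eventually.of_forall fun t => hψnn t)
    rw [h1]
    exact setLIntegral_congr (Ioc_ae_eq_Icc.trans Ico_ae_eq_Icc.symm)
  -- measurability of slices and of ρ
  have hSmeas : ∀ x, MeasurableSet (S x) := fun x => measurable_prodMk_left hmeas
  have hρmeas : Measurable ρ := measurable_measure_prodMk_left hmeas
  -- pointwise bound: a.e. x, ofReal (Φ ((ρ x).toReal)) ≤ ∫⁻ t in S x, g t
  have hpt : ∀ᵐ x : ℝ, ENNReal.ofReal (Φ ((ρ x).toReal)) ≤ ∫⁻ t in S x, g t := by
    filter_upwards [hρfin] with x hx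
    rw [hftc' _ ENNReal.toReal_nonneg]
    exact rearrange_aux hψmono hψnn (hSmeas x) (fun t ht => ht.1) hx
  -- the function under the LHS integral
  set F : ℝ → ℝ := fun x => Φ ((ρ x).toReal) with hFdef
  have hΦcont : ContinuousOn Φ (Ici 0) := fun x hx => (hΦdiff x hx).continuousWithinAt
  have hFmeas : Measurable F := by
    have hmax : Continuous fun t : ℝ => Φ (max t 0) :=
      hΦcont.comp_continuous (continuous_id.max continuous_const)
        (fun t => le_max_right t 0)
    have : F = (fun t : ℝ => Φ (max t 0)) ∘ fun x => (ρ x).toReal := by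
      funext x
      simp [hFdef, max_eq_left ENNReal.toReal_nonneg]
    rw [this]
    exact hmax.measurable.comp hρmeas.ennreal_toReal
  have hFnn : ∀ x, 0 ≤ F x := fun x => hΦnn _ ENNReal.toReal_nonneg
  -- Tonelli computation
  have hswap : ∫⁻ x : ℝ, ∫⁻ t in S x, g t =
      ∫⁻ t in Ici (0:ℝ), g t * volume (C t) := by
    have hind : Measurable fun p : ℝ × ℝ => E.indicator (fun q => g q.2) p :=
      (hgmeas.comp measurable_snd).indicator hmeas
    calc ∫⁻ x : ℝ, ∫⁻ t in S x, g t
        = ∫⁻ x : ℝ, ∫⁻ t : ℝ, E.indicator (fun q => g q.2) (x, t) := by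
          refine lintegral_congr fun x => ?_
          rw [← lintegral_indicator (hSmeas x)]
          refine lintegral_congr fun t => ?_
          by_cases ht : t ∈ S x
          · rw [indicator_of_mem ht, indicator_of_mem (by exact ht)]
          · rw [indicator_of_notMem ht, indicator_of_notMem (by exact ht)]
      _ = ∫⁻ t : ℝ, ∫⁻ x : ℝ, E.indicator (fun q => g q.2) (x, t) := by
          refine lintegral_lintegral_swap ?_
          have : (Function.uncurry fun x t : ℝ => E.indicator (fun q => g q.2) (x, t)) =
              fun p : ℝ × ℝ => E.indicator (fun q => g q.2) p := by
            funext p; rfl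
          rw [this]
          exact hind.aemeasurable
      _ = ∫⁻ t : ℝ, g t * volume {x : ℝ | (x, t) ∈ E} := by
          refine lintegral_congr fun t => ?_
          have hsl : MeasurableSet {x : ℝ | (x, t) ∈ E} :=
            (measurable_id.prodMk measurable_const) hmeas
          have : (fun x : ℝ => E.indicator (fun q => g q.2) (x, t)) =
              fun x : ℝ => ({x : ℝ | (x, t) ∈ E}).indicator (fun _ => g t) x := by
            funext x
            by_cases hx : (x, t) ∈ E
            · rw [indicator_of_mem hx, indicator_of_mem (by exact hx)]
            · rw [indicator_of_notMem hx, indicator_of_notMem (by exact hx)]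
          rw [this, lintegral_indicator hsl, setLIntegral_const]
      _ = ∫⁻ t : ℝ, (Ici (0:ℝ)).indicator (fun t => g t * volume (C t)) t := by
          refine lintegral_congr fun t => ?_
          by_cases ht : 0 ≤ t
          · rw [indicator_of_mem (show t ∈ Ici 0 from ht)]
            congr 2
            ext x
            simp [hE, ht]
          · rw [indicator_of_notMem (show t ∉ Ici 0 from ht)]
            have : {x : ℝ | (x, t) ∈ E} = ∅ := by
              ext x; simp [hE, ht]
            rw [this, measure_empty, mul_zero]
      _ = ∫⁻ t in Ici (0:ℝ), g t * volume (C t) :=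
          lintegral_indicator measurableSet_Ici _
  -- identify the RHS with a lintegral
  set L : ℝ≥0∞ := ∫⁻ t in Ioi (0:ℝ), g t * volume (C t) with hL
  have hLIci : (∫⁻ t in Ici (0:ℝ), g t * volume (C t)) = L :=
    setLIntegral_congr Ioi_ae_eq_Ici.symm
  have hRHSnn : 0 ≤ ∫ h in Ioi (0:ℝ), Φ' h * (volume (C h)).toReal :=
    setIntegral_nonneg measurableSet_Ioi fun t ht =>
      mul_nonneg (hΦ'nn t (mem_Ici.mpr (le_of_lt ht))) ENNReal.toReal_nonneg
  have hRHS : ENNReal.ofReal (∫ h in Ioi (0:ℝ), Φ' h * (volume (C h)).toReal) = L := by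
    rw [ofReal_integral_eq_lintegral_ofReal hint ?_]
    · refine setLIntegral_congr_fun measurableSet_Ioi
        (fun t ht => ?_)
      rw [ENNReal.ofReal_mul (hΦ'nn t (mem_Ici.mpr (le_of_lt ht))),
        ENNReal.ofReal_toReal (hfin t).ne, ← hψeq t (le_of_lt ht)]
    · exact (ae_restrict_iff' measurableSet_Ioi).mpr
        (Filter.Eventually.of_forall fun t ht =>
          mul_nonneg (hΦ'nn t (mem_Ici.mpr (le_of_lt ht))) ENNReal.toReal_nonneg)
  have hLfin : L ≠ ⊤ := by rw [← hRHS]; exact ENNReal.ofReal_ne_top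
  -- conclude
  have hchain : (∫⁻ x : ℝ, ENNReal.ofReal (F x)) ≤ L := by
    calc (∫⁻ x : ℝ, ENNReal.ofReal (F x)) ≤ ∫⁻ x : ℝ, ∫⁻ t in S x, g t :=
          lintegral_mono_ae hpt
      _ = ∫⁻ t in Ici (0:ℝ), g t * volume (C t) := hswap
      _ = L := hLIci
  have hLHS : (∫ x : ℝ, F x) = (∫⁻ x : ℝ, ENNReal.ofReal (F x)).toReal :=
    integral_eq_lintegral_of_nonneg_ae (Filter.Eventually.of_forall hFnn)
      hFmeas.aestronglyMeasurable
  calc (∫ x : ℝ, Φ ((volume {h : ℝ | 0 ≤ h ∧ x ∈ C h}).toReal))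
      = (∫⁻ x : ℝ, ENNReal.ofReal (F x)).toReal := hLHS
    _ ≤ L.toReal := ENNReal.toReal_mono hLfin hchain
    _ = (ENNReal.ofReal (∫ h in Ioi (0:ℝ), Φ' h * (volume (C h)).toReal)).toReal := by
        rw [hRHS]
    _ = ∫ h in Ioi (0:ℝ), Φ' h * (volume (C h)).toReal := ENNReal.toReal_ofReal hRHSnn
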